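/- Let v_1,...,v_n be independent nonnegative random variables. For any δ > 0 and any price vector p, define p' by p'_i = max(p_i, δ). Then the expected revenue satisfies E[R_{p'}] ≥ E[R_p] − δ. -/

import Mathlib

open MeasureTheory ProbabilityTheory

open scoped Classical in
/-- Revenue of a unit-demand buyer with valuations `v` facing prices `p`:
the buyer purchases the item `i` maximizing `v i - p i` provided `v i - p i ≥ 0`
(ties broken by smallest index), paying `p i`; revenue is `0` otherwise. -/
noncomputable def revenue {n : ℕ} (p v : Fin n → ℝ) : ℝ :=
  let S : Finset (Fin n) :=
    Finset.univ.filter (fun i => 0 ≤ v i - p i ∧ ∀ j, v j - p j ≤ v i - p i)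
  if h : S.Nonempty then p (S.min' h) else 0

open scoped Classical

lemma revenue_nonneg {n : ℕ} {p v : Fin n → ℝ} (hp : ∀ i, 0 ≤ p i) :
    0 ≤ revenue p v := by
  rw [revenue]
  split
  · exact hp _
  · exact le_refl 0

lemma revenue_pointwise {n : ℕ} (δ : ℝ) (hδ : 0 < δ) (p v : Fin n → ℝ) :
    revenue p v ≤ revenue (fun i => max (p i) δ) v + δ := by
  set p' : Fin n → ℝ := fun i => max (p i) δ with hp'
  have hp'nn : ∀ i, 0 ≤ p' i := fun i => le_trans hδ.le (le_max_right _ _)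
  have hrev' : 0 ≤ revenue p' v := revenue_nonneg hp'nn
  set S : Finset (Fin n) :=
    Finset.univ.filter (fun i => 0 ≤ v i - p i ∧ ∀ j, v j - p j ≤ v i - p i) with hS
  set S' : Finset (Fin n) :=
    Finset.univ.filter (fun i => 0 ≤ v i - p' i ∧ ∀ j, v j - p' j ≤ v i - p' i) with hS'
  by_cases h : S.Nonempty
  · have hrevp : revenue p v = p (S.min' h) := by
      rw [revenue]; rw [dif_pos h]
    set i := S.min' h with hi
    have hiS : i ∈ S := S.min'_mem h
    rw [hS, Finset.mem_filter] at hiS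
    obtain ⟨-, hi0, himax⟩ := hiS
    by_cases hpi : p i < δ
    · linarith [hrev', hrevp]
    · push_neg at hpi
      have hp'i : p' i = p i := max_eq_left hpi
      have hple : ∀ j, p j ≤ p' j := fun j => le_max_left _ _
      have hiS' : i ∈ S' := by
        rw [hS', Finset.mem_filter]
        refine ⟨Finset.mem_univ _, by rw [hp'i]; exact hi0, fun j => ?_⟩
        rw [hp'i]
        calc v j - p' j ≤ v j - p j := by linarith [hple j]
          _ ≤ v i - p i := himax j
      have h' : S'.Nonempty := ⟨i, hiS'⟩
      have hrevp' : revenue p' v = p' (S'.min' h') := by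
        rw [revenue]; rw [dif_pos h']
      set k := S'.min' h' with hk
      have hkS' : k ∈ S' := S'.min'_mem h'
      rw [hS', Finset.mem_filter] at hkS'
      obtain ⟨-, hk0, hkmax⟩ := hkS'
      -- v k - p' k ≥ v i - p' i = v i - p i, and v k - p' k ≤ v k - p k ≤ v i - p i
      have h1 : v i - p i ≤ v k - p' k := by
        have := hkmax i; rw [hp'i] at this; linarith [this]
      have h2 : v k - p' k ≤ v k - p k := by linarith [hple k]
      have h3 : v k - p k ≤ v i - p i := himax k
      have hpk : p' k = p k := by linarith
      have hkS : k ∈ S := by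
        rw [hS, Finset.mem_filter]
        refine ⟨Finset.mem_univ _, ?_, fun j => ?_⟩
        · linarith
        · linarith [himax j]
      have hik : i ≤ k := Finset.min'_le _ _ hkS
      have hki : k ≤ i := Finset.min'_le _ _ hiS'
      have : k = i := le_antisymm hki hik
      rw [hrevp, hrevp', this, hp'i]
      linarith
  · have : revenue p v = 0 := by rw [revenue]; rw [dif_neg h]
    linarith

lemma revenue_eq_sum {n : ℕ} (p v : Fin n → ℝ) :
    revenue p v = ∑ i, if (0 ≤ v i - p i ∧ (∀ j, v j - p j ≤ v i - p i) ∧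
      ∀ j < i, ¬(0 ≤ v j - p j ∧ ∀ k, v k - p k ≤ v j - p j)) then p i else 0 := by
  set S : Finset (Fin n) :=
    Finset.univ.filter (fun i => 0 ≤ v i - p i ∧ ∀ j, v j - p j ≤ v i - p i) with hS
  have hmem : ∀ i, i ∈ S ↔ (0 ≤ v i - p i ∧ ∀ j, v j - p j ≤ v i - p i) := by
    intro i; rw [hS, Finset.mem_filter]; simp
  by_cases h : S.Nonempty
  · have hrevp : revenue p v = p (S.min' h) := by rw [revenue]; rw [dif_pos h]
    set i := S.min' h with hi
    have hiS : i ∈ S := S.min'_mem h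
    rw [hrevp, Finset.sum_eq_single i]
    · rw [if_pos]
      refine ⟨((hmem i).1 hiS).1, ((hmem i).1 hiS).2, fun j hj hjmem => ?_⟩
      have : i ≤ j := Finset.min'_le _ _ ((hmem j).2 hjmem)
      exact absurd hj (not_lt.2 this)
    · intro j _ hji
      rw [if_neg]
      rintro ⟨h1, h2, h3⟩
      rcases lt_or_gt_of_ne hji with hlt | hgt
      · -- j < i but j ∈ S contradicts min'
        have : i ≤ j := Finset.min'_le _ _ ((hmem j).2 ⟨h1, h2⟩)
        exact absurd hlt (not_lt.2 this)
      · exact h3 i hgt ((hmem i).1 hiS)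
    · intro hi'; exact absurd (Finset.mem_univ i) hi'
  · have hrev : revenue p v = 0 := by rw [revenue]; rw [dif_neg h]
    rw [hrev, Finset.sum_eq_zero]
    intro i _
    rw [if_neg]
    rintro ⟨h1, h2, -⟩
    exact h ⟨i, (hmem i).2 ⟨h1, h2⟩⟩

lemma revenue_measurable {n : ℕ} {Ω : Type*} [MeasurableSpace Ω]
    (V : Fin n → Ω → ℝ) (hVmeas : ∀ i, Measurable (V i)) (p : Fin n → ℝ) :
    Measurable (fun ω => revenue p (fun i => V i ω)) := by
  have : (fun ω => revenue p (fun i => V i ω)) =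
      fun ω => ∑ i, if (0 ≤ V i ω - p i ∧ (∀ j, V j ω - p j ≤ V i ω - p i) ∧
        ∀ j < i, ¬(0 ≤ V j ω - p j ∧ ∀ k, V k ω - p k ≤ V j ω - p j)) then p i else 0 := by
    funext ω; exact revenue_eq_sum p (fun i => V i ω)
  rw [this]
  apply Finset.measurable_sum
  intro i _
  have hset : ∀ (j : Fin n) (c : ℝ), MeasurableSet {ω | 0 ≤ V j ω - p j} := by
    intro j c
    exact measurableSet_le measurable_const ((hVmeas j).sub measurable_const)
  have hset2 : ∀ (j k : Fin n), MeasurableSet {ω | V k ω - p k ≤ V j ω - p j} := by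
    intro j k
    exact measurableSet_le ((hVmeas k).sub measurable_const) ((hVmeas j).sub measurable_const)
  have hgood : ∀ (j : Fin n), MeasurableSet
      {ω | 0 ≤ V j ω - p j ∧ ∀ k, V k ω - p k ≤ V j ω - p j} := by
    intro j
    have : {ω | 0 ≤ V j ω - p j ∧ ∀ k, V k ω - p k ≤ V j ω - p j} =
        {ω | 0 ≤ V j ω - p j} ∩ ⋂ k, {ω | V k ω - p k ≤ V j ω - p j} := by
      ext ω; simp [Set.mem_iInter]
    rw [this]
    exact (hset j 0).inter (MeasurableSet.iInter fun k => hset2 j k)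
  have hcond : MeasurableSet {ω | 0 ≤ V i ω - p i ∧ (∀ j, V j ω - p j ≤ V i ω - p i) ∧
      ∀ j < i, ¬(0 ≤ V j ω - p j ∧ ∀ k, V k ω - p k ≤ V j ω - p j)} := by
    have : {ω | 0 ≤ V i ω - p i ∧ (∀ j, V j ω - p j ≤ V i ω - p i) ∧
        ∀ j < i, ¬(0 ≤ V j ω - p j ∧ ∀ k, V k ω - p k ≤ V j ω - p j)} =
        {ω | 0 ≤ V i ω - p i ∧ ∀ k, V k ω - p k ≤ V i ω - p i} ∩
        ⋂ j, ⋂ (_ : j < i),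
          ({ω | 0 ≤ V j ω - p j ∧ ∀ k, V k ω - p k ≤ V j ω - p j})ᶜ := by
      ext ω
      simp only [Set.mem_inter_iff, Set.mem_iInter, Set.mem_compl_iff, Set.mem_setOf_eq]
      tauto
    rw [this]
    exact (hgood i).inter (MeasurableSet.iInter fun j =>
      MeasurableSet.iInter fun _ => (hgood j).compl)
  exact Measurable.ite hcond measurable_const measurable_const

lemma revenue_abs_le {n : ℕ} (p v : Fin n → ℝ) :
    |revenue p v| ≤ ∑ j, |p j| := by
  have hnn : 0 ≤ ∑ j, |p j| := Finset.sum_nonneg fun j _ => abs_nonneg _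
  rw [revenue]
  split
  · next h =>
      exact Finset.single_le_sum (f := fun j => |p j|) (fun j _ => abs_nonneg _)
        (Finset.mem_univ _)
  · simpa using hnn

theorem raising_low_prices_loses_at_most_delta
    {Ω : Type*} [MeasurableSpace Ω] (μ : Measure Ω) [IsProbabilityMeasure μ]
    {n : ℕ} (V : Fin n → Ω → ℝ) (hVmeas : ∀ i, Measurable (V i))
    (hindep : iIndepFun V μ)
    (hnonneg : ∀ i, ∀ᵐ ω ∂μ, 0 ≤ V i ω)
    (δ : ℝ) (hδ : 0 < δ) (p : Fin n → ℝ) :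
    ∫ ω, revenue p (fun i => V i ω) ∂μ - δ ≤
      ∫ ω, revenue (fun i => max (p i) δ) (fun i => V i ω) ∂μ := by
  set p' : Fin n → ℝ := fun i => max (p i) δ with hp'
  have hint : ∀ q : Fin n → ℝ, Integrable (fun ω => revenue q (fun i => V i ω)) μ := by
    intro q
    refine Integrable.mono' (integrable_const (∑ j, |q j|))
      (revenue_measurable V hVmeas q).aestronglyMeasurable ?_
    filter_upwards with ω
    simpa using revenue_abs_le q (fun i => V i ω)
  have hpt : ∀ ω, revenue p (fun i => V i ω) ≤ revenue p' (fun i => V i ω) + δ :=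
    fun ω => revenue_pointwise δ hδ p (fun i => V i ω)
  have h1 : ∫ ω, revenue p (fun i => V i ω) ∂μ ≤
      ∫ ω, (revenue p' (fun i => V i ω) + δ) ∂μ :=
    integral_mono (hint p) ((hint p').add (integrable_const δ)) hpt
  rw [integral_add (hint p') (integrable_const δ), integral_const] at h1
  simp only [measure_univ, ENNReal.toReal_one, probReal_univ, smul_eq_mul, one_mul] at h1
  linarith
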